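/- Let k > 0, ν > 0, and c ∈ ℝ. Then for all x > 0, 2k · d/dx W^k_{ν,c}(x) = W^k_{ν−k,c}(x) − c k W^k_{ν+k,c}(x). -/

import Mathlib

open Real

/-- The k-gamma function, `Γ_k(x) = k^(x/k - 1) * Γ(x/k)`. -/
noncomputable def kGamma (k x : ℝ) : ℝ := k ^ (x / k - 1) * Real.Gamma (x / k)

/-- The generalized k-Bessel function `W^k_{ν,c}(x)`. -/
noncomputable def kBesselW (k ν c x : ℝ) : ℝ :=
  ∑' r : ℕ, (-c) ^ r / (kGamma k (r * k + ν + k) * (r.factorial : ℝ)) *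
    (x / 2) ^ (2 * (r : ℝ) + ν / k)

lemma kGamma_pos {k x : ℝ} (hk : 0 < k) (hx : 0 < x) : 0 < kGamma k x :=
  mul_pos (Real.rpow_pos_of_pos hk _) (Real.Gamma_pos_of_pos (div_pos hx hk))

lemma kGamma_add {k x : ℝ} (hk : 0 < k) (hx : 0 < x) : kGamma k (x + k) = x * kGamma k x := by
  unfold kGamma
  have h1 : (x + k) / k = x / k + 1 := by field_simp
  rw [h1, Real.Gamma_add_one (by positivity), show x/k+1-1 = (x/k-1)+1 from by ring,
    Real.rpow_add hk, Real.rpow_one]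
  field_simp

lemma fact_mul_Gamma_le {p : ℝ} (hp : 0 < p) (r : ℕ) :
    (r.factorial : ℝ) * Real.Gamma (p + 1) ≤ Real.Gamma ((r : ℝ) + p + 1) := by
  induction r with
  | zero => simp
  | succ n ih =>
      have hpos : (0:ℝ) < (n:ℝ) + p + 1 := by positivity
      rw [Nat.factorial_succ]
      push_cast
      have h1 : ((n:ℝ) + 1) + p + 1 = ((n:ℝ) + p + 1) + 1 := by ring
      rw [h1, Real.Gamma_add_one hpos.ne']
      have hG : (0:ℝ) < Real.Gamma (p+1) := Real.Gamma_pos_of_pos (by positivity)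
      have hf : (0:ℝ) ≤ (n.factorial : ℝ) * Real.Gamma (p+1) :=
        mul_nonneg (by positivity) hG.le
      calc ((n:ℝ)+1) * (n.factorial:ℝ) * Real.Gamma (p+1)
          = ((n:ℝ)+1) * ((n.factorial:ℝ) * Real.Gamma (p+1)) := by ring
        _ ≤ ((n:ℝ)+p+1) * ((n.factorial:ℝ) * Real.Gamma (p+1)) := by
            apply mul_le_mul_of_nonneg_right (by linarith) hf
        _ ≤ ((n:ℝ)+p+1) * Real.Gamma ((n:ℝ)+p+1) :=
            mul_le_mul_of_nonneg_left ih hpos.le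

lemma kGamma_eq {k ν : ℝ} (hk : 0 < k) (r : ℕ) :
    kGamma k ((r:ℝ) * k + ν + k) = k ^ ((r:ℝ) + ν / k) * Real.Gamma ((r:ℝ) + ν / k + 1) := by
  unfold kGamma
  have h : ((r:ℝ) * k + ν + k) / k = (r:ℝ) + ν / k + 1 := by field_simp
  rw [h]; ring_nf

lemma kGamma_lower {k ν : ℝ} (hk : 0 < k) (hν : 0 < ν) (r : ℕ) :
    k ^ (ν / k) * k ^ r * ((r.factorial : ℝ) * Real.Gamma (ν / k + 1))
      ≤ kGamma k ((r:ℝ) * k + ν + k) := by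
  rw [kGamma_eq hk]
  have h1 : (k:ℝ) ^ ((r:ℝ) + ν / k) = k ^ (r:ℕ) * k ^ (ν/k) := by
    rw [Real.rpow_add hk, Real.rpow_natCast]
  rw [h1]
  have h2 := fact_mul_Gamma_le (p := ν/k) (by positivity) r
  calc k ^ (ν/k) * k ^ r * ((r.factorial : ℝ) * Real.Gamma (ν / k + 1))
      ≤ k ^ (ν/k) * k ^ r * Real.Gamma ((r:ℝ) + ν/k + 1) := by
        apply mul_le_mul_of_nonneg_left h2 (by positivity)
    _ = k ^ (r:ℕ) * k ^ (ν/k) * Real.Gamma ((r:ℝ) + ν/k + 1) := by ring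

/-- Master summability lemma. -/
lemma summable_master {k ν : ℝ} (hk : 0 < k) (hν : 0 < ν) (q D : ℝ) (hq : 0 ≤ q) (hD : 0 ≤ D) :
    Summable (fun r : ℕ => D * (2 * (r:ℝ) + ν / k + 1) * q ^ r /
      (kGamma k ((r:ℝ) * k + ν + k) * (r.factorial : ℝ))) := by
  set p := ν / k with hp
  have hp0 : 0 < p := by positivity
  have hGp : 0 < Real.Gamma (p + 1) := Real.Gamma_pos_of_pos (by positivity)
  have hkp : (0:ℝ) < k ^ p := Real.rpow_pos_of_pos hk _
  set C := D * (p + 3) / (k ^ p * Real.Gamma (p + 1)) with hC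
  have hC0 : 0 ≤ C := div_nonneg (mul_nonneg hD (by linarith)) (by positivity)
  apply Summable.of_nonneg_of_le (f := fun r : ℕ => C * ((2 * q / k) ^ r / (r.factorial : ℝ)))
  · intro r
    have hG := kGamma_pos (x := (r:ℝ)*k+ν+k) hk (by positivity)
    positivity
  · intro r
    have hG := kGamma_pos (x := (r:ℝ)*k+ν+k) hk (by positivity)
    have hfac : (0:ℝ) < (r.factorial : ℝ) := by positivity
    have hfac1 : (1:ℝ) ≤ (r.factorial : ℝ) := by exact_mod_cast r.factorial_pos
    have h2r : ((r:ℝ)) + 1 ≤ 2 ^ r := by exact_mod_cast Nat.lt_two_pow_self (n := r)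
    have h1 : (1:ℝ) ≤ 2 ^ r := one_le_pow₀ (by norm_num)
    have hcoef : 2 * (r:ℝ) + p + 1 ≤ (p + 3) * 2 ^ r := by nlinarith
    have hlow := kGamma_lower hk hν r
    have hq' : (0:ℝ) ≤ q ^ r := by positivity
    calc D * (2 * (r:ℝ) + p + 1) * q ^ r / (kGamma k ((r:ℝ)*k+ν+k) * (r.factorial:ℝ))
        ≤ D * ((p+3) * 2^r) * q ^ r /
            ((k ^ p * k ^ r * ((r.factorial:ℝ) * Real.Gamma (p+1))) * (r.factorial:ℝ)) := by
          apply div_le_div₀ (by positivity)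
            (by nlinarith [mul_le_mul_of_nonneg_left hcoef (mul_nonneg hD hq')])
            (by positivity)
            (mul_le_mul_of_nonneg_right hlow hfac.le)
      _ = C * ((2*q/k) ^ r / ((r.factorial:ℝ) * (r.factorial:ℝ))) := by
          rw [hC, div_pow, mul_pow]
          field_simp
      _ ≤ C * ((2*q/k) ^ r / (r.factorial:ℝ)) := by
          apply mul_le_mul_of_nonneg_left _ hC0
          exact div_le_div_of_nonneg_left (by positivity) hfac
            (le_mul_of_one_le_left hfac.le hfac1)
  · exact (Real.summable_pow_div_factorial (2 * q / k)).mul_left C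

set_option maxHeartbeats 1000000 in
theorem kBessel_deriv_recurrence (k ν c : ℝ) (hk : 0 < k) (hν : 0 < ν) (x : ℝ) (hx : 0 < x) :
    2 * k * deriv (kBesselW k ν c) x =
      kBesselW k (ν - k) c x - c * k * kBesselW k (ν + k) c x := by
  have hk' : k ≠ 0 := hk.ne'
  set p := ν / k with hp
  have hp0 : 0 < p := by positivity
  have hx2 : (0:ℝ) < x / 2 := by linarith
  have hx4 : (0:ℝ) < x / 4 := by linarith
  set A : ℕ → ℝ := fun r => (-c) ^ r / (kGamma k ((r:ℝ) * k + ν + k) * (r.factorial : ℝ))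
    with hA
  set f : ℕ → ℝ → ℝ := fun r y => A r * (y / 2) ^ (2 * (r:ℝ) + p) with hf
  set f' : ℕ → ℝ → ℝ :=
    fun r y => A r * (2 * (r:ℝ) + p) * (y / 2) ^ (2 * (r:ℝ) + p - 1) * (1/2) with hf'
  have hGpos : ∀ r : ℕ, 0 < kGamma k ((r:ℝ)*k+ν+k) := fun r => kGamma_pos hk (by positivity)
  have hFpos : ∀ r : ℕ, (0:ℝ) < (r.factorial:ℝ) := fun r => by positivity
  set B : ℝ := max ((x/4) ^ (p-1)) (x ^ (p-1)) with hB
  have hB0 : 0 < B := lt_max_of_lt_left (Real.rpow_pos_of_pos hx4 _)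
  set q : ℝ := |c| * x^2 with hq
  have hq0 : 0 ≤ q := by positivity
  set u : ℕ → ℝ :=
    fun r => B * (2 * (r:ℝ) + p + 1) * q ^ r / (kGamma k ((r:ℝ)*k+ν+k) * (r.factorial:ℝ))
    with hu_def
  have hu : Summable u := summable_master hk hν q B hq0 hB0.le
  -- generic bound on t ^ (p-1)
  have hBle : ∀ t : ℝ, x/4 ≤ t → t ≤ x → t ^ (p-1) ≤ B := by
    intro t h1 h2
    rcases le_or_gt 0 (p-1) with hcase|hcase
    · exact le_max_of_le_right (Real.rpow_le_rpow (by linarith) h2 hcase)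
    · exact le_max_of_le_left (Real.rpow_le_rpow_of_nonpos hx4 h1 hcase.le)
  -- splitting the power
  have hsplit : ∀ (r : ℕ) (y : ℝ), 0 < y →
      (y/2) ^ (2 * (r:ℝ) + p - 1) = ((y/2)^2) ^ r * (y/2) ^ (p-1) := by
    intro r y hy
    rw [show 2 * (r:ℝ) + p - 1 = ((2*r : ℕ):ℝ) + (p-1) from by push_cast; ring,
      Real.rpow_add (by positivity), Real.rpow_natCast, pow_mul]
  -- derivative of each term
  have hderiv : ∀ (r : ℕ) (y : ℝ), 0 < y → HasDerivAt (f r) (f' r y) y := by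
    intro r y hy
    have h1 : HasDerivAt (fun z : ℝ => z / 2) (1/2) y := (hasDerivAt_id y).div_const 2
    have h2 := (Real.hasDerivAt_rpow_const (x := y/2) (p := 2*(r:ℝ)+p)
      (Or.inl (by positivity))).comp y h1
    have h3 := h2.const_mul (A r)
    refine h3.congr_deriv ?_
    show _ = A r * (2 * (r:ℝ) + p) * (y / 2) ^ (2 * (r:ℝ) + p - 1) * (1 / 2)
    ring
  -- norm bound on the strip
  have hbound : ∀ (r : ℕ) (y : ℝ), y ∈ Set.Ioo (x/2) (x+x) → ‖f' r y‖ ≤ u r := by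
    intro r y hy
    obtain ⟨hy1, hy2⟩ := hy
    have hy0 : 0 < y := lt_trans hx2 hy1
    have hyx : y/2 ≤ x := by linarith
    have hyq : x/4 ≤ y/2 := by linarith
    have habs : ‖f' r y‖ = |c|^r / (kGamma k ((r:ℝ)*k+ν+k) * (r.factorial:ℝ)) *
        (2*(r:ℝ)+p) * (y/2) ^ (2*(r:ℝ)+p-1) * (1/2) := by
      rw [Real.norm_eq_abs, hf']
      rw [abs_mul, abs_mul, abs_mul, hA]
      rw [abs_div, abs_pow, abs_neg, abs_of_pos (mul_pos (hGpos r) (hFpos r)),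
        abs_of_nonneg (by positivity : (0:ℝ) ≤ 2*(r:ℝ)+p),
        abs_of_nonneg (Real.rpow_nonneg (by positivity) _)]
      norm_num
    rw [habs, hsplit r y hy0]
    have hb1 : ((y/2)^2) ^ r ≤ (x^2) ^ r := pow_le_pow_left₀ (by positivity) (by nlinarith) r
    have hb2 : (y/2) ^ (p-1) ≤ B := hBle _ hyq hyx
    have hm : ((y/2)^2) ^ r * (y/2)^(p-1) ≤ (x^2)^r * B :=
      mul_le_mul hb1 hb2 (Real.rpow_nonneg (by positivity) _) (by positivity)
    have hGF := mul_pos (hGpos r) (hFpos r)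
    rw [hu_def]
    beta_reduce
    have hc : q ^ r = |c|^r * (x^2)^r := by rw [hq, mul_pow]
    rw [hc]
    have hnum : ((2*(r:ℝ)+p) * (1/2)) * (|c|^r * (((y/2)^2)^r * (y/2)^(p-1)))
        ≤ (2*(r:ℝ)+p+1) * (|c|^r * ((x^2)^r * B)) := by
      apply mul_le_mul (by linarith) (mul_le_mul_of_nonneg_left hm (by positivity))
        (by positivity) (by linarith)
    calc |c|^r / (kGamma k ((r:ℝ)*k+ν+k) * (r.factorial:ℝ)) * (2*(r:ℝ)+p) *
          (((y/2)^2)^r * (y/2)^(p-1)) * (1/2)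
        = ((2*(r:ℝ)+p) * (1/2)) * (|c|^r * (((y/2)^2)^r * (y/2)^(p-1))) /
            (kGamma k ((r:ℝ)*k+ν+k) * (r.factorial:ℝ)) := by ring
      _ ≤ ((2*(r:ℝ)+p+1)) * (|c|^r * ((x^2)^r * B)) /
            (kGamma k ((r:ℝ)*k+ν+k) * (r.factorial:ℝ)) := by
          exact (div_le_div_iff_of_pos_right hGF).mpr hnum
      _ = B * (2*(r:ℝ)+p+1) * (|c|^r * (x^2)^r) /
            (kGamma k ((r:ℝ)*k+ν+k) * (r.factorial:ℝ)) := by ring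
  -- power split at exponent p
  have hsplit2 : (x/2) ^ (2 * (0:ℝ) + p) = (x/2) ^ p := by norm_num
  have hsplitp : ∀ r : ℕ, (x/2) ^ (2 * (r:ℝ) + p) = ((x/2)^2) ^ r * (x/2) ^ p := by
    intro r
    rw [show 2 * (r:ℝ) + p = ((2*r : ℕ):ℝ) + p from by push_cast; ring,
      Real.rpow_add hx2, Real.rpow_natCast, pow_mul]
  -- summability of f at x
  have hfx : Summable (fun r => f r x) := by
    apply Summable.of_norm_bounded
      (summable_master hk hν q ((x/2)^p) hq0 (Real.rpow_pos_of_pos hx2 p).le)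
    intro r
    have hGF := mul_pos (hGpos r) (hFpos r)
    have habs : ‖f r x‖ = |c|^r / (kGamma k ((r:ℝ)*k+ν+k) * (r.factorial:ℝ)) *
        (x/2) ^ (2*(r:ℝ)+p) := by
      rw [Real.norm_eq_abs, hf, hA]
      beta_reduce
      rw [abs_mul, abs_div, abs_pow, abs_neg, abs_of_pos hGF,
        abs_of_nonneg (Real.rpow_nonneg (by positivity) _)]
    rw [habs, hsplitp r]
    have hb1 : ((x/2)^2) ^ r ≤ (x^2) ^ r := pow_le_pow_left₀ (by positivity) (by nlinarith) r
    have hc : q ^ r = |c|^r * (x^2)^r := by rw [hq, mul_pow]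
    have hnum : |c|^r * (((x/2)^2)^r * (x/2)^p)
        ≤ (x/2)^p * ((2*(r:ℝ)+p+1) * (|c|^r * (x^2)^r)) := by
      have h1 : |c|^r * ((x/2)^2)^r ≤ (2*(r:ℝ)+p+1) * (|c|^r * (x^2)^r) := by
        have := mul_le_mul_of_nonneg_left hb1 (by positivity : (0:ℝ) ≤ |c|^r)
        nlinarith [mul_nonneg (by positivity : (0:ℝ) ≤ |c|^r)
          (by positivity : (0:ℝ) ≤ ((x:ℝ)^2)^r)]
      calc |c|^r * (((x/2)^2)^r * (x/2)^p) = (|c|^r * ((x/2)^2)^r) * (x/2)^p := by ring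
        _ ≤ ((2*(r:ℝ)+p+1) * (|c|^r * (x^2)^r)) * (x/2)^p :=
            mul_le_mul_of_nonneg_right h1 (Real.rpow_nonneg (by positivity) _)
        _ = (x/2)^p * ((2*(r:ℝ)+p+1) * (|c|^r * (x^2)^r)) := by ring
    calc |c|^r / (kGamma k ((r:ℝ)*k+ν+k) * (r.factorial:ℝ)) * (((x/2)^2)^r * (x/2)^p)
        = |c|^r * (((x/2)^2)^r * (x/2)^p) / (kGamma k ((r:ℝ)*k+ν+k) * (r.factorial:ℝ)) := by
          ring
      _ ≤ (x/2)^p * ((2*(r:ℝ)+p+1) * (|c|^r * (x^2)^r)) /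
            (kGamma k ((r:ℝ)*k+ν+k) * (r.factorial:ℝ)) := (div_le_div_iff_of_pos_right hGF).mpr hnum
      _ = (x/2)^p * (2*(r:ℝ)+p+1) * q^r / (kGamma k ((r:ℝ)*k+ν+k) * (r.factorial:ℝ)) := by
          rw [hc]; ring
  have hmem : x ∈ Set.Ioo (x/2) (x+x) := ⟨by linarith, by linarith⟩
  have HD : HasDerivAt (fun z => ∑' r, f r z) (∑' r, f' r x) x :=
    hasDerivAt_tsum_of_isPreconnected hu isOpen_Ioo isPreconnected_Ioo
      (fun r y hy => hderiv r y (lt_trans hx2 hy.1)) hbound hmem hfx hmem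
  have hWf : kBesselW k ν c = fun z => ∑' r, f r z := rfl
  have hDeriv : deriv (kBesselW k ν c) x = ∑' r, f' r x := by rw [hWf]; exact HD.deriv
  -- the RHS series
  set gg : ℕ → ℝ := fun r => (-c)^r / (kGamma k ((r:ℝ)*k+(ν-k)+k) * (r.factorial:ℝ)) *
    (x/2)^(2*(r:ℝ)+(ν-k)/k) with hgg
  set hh : ℕ → ℝ := fun r => (-c)^r / (kGamma k ((r:ℝ)*k+(ν+k)+k) * (r.factorial:ℝ)) *
    (x/2)^(2*(r:ℝ)+(ν+k)/k) with hhh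
  have hWg : kBesselW k (ν-k) c x = ∑' r, gg r := rfl
  have hWh : kBesselW k (ν+k) c x = ∑' r, hh r := rfl
  set d : ℕ → ℝ := fun r => (r:ℝ)*k *
    ((-c)^r / (kGamma k ((r:ℝ)*k+ν+k) * (r.factorial:ℝ)) * (x/2)^(2*(r:ℝ)+p-1)) with hd
  -- term identities
  have claim1 : ∀ r : ℕ, 2*k*f' r x = gg r + d r := by
    intro r
    have hrk : (0:ℝ) < (r:ℝ)*k+ν := by positivity
    have hG2 : (0:ℝ) < kGamma k ((r:ℝ)*k+ν) := kGamma_pos hk hrk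
    have hrec : kGamma k ((r:ℝ)*k+ν+k) = ((r:ℝ)*k+ν) * kGamma k ((r:ℝ)*k+ν) :=
      kGamma_add hk hrk
    have he1 : (r:ℝ)*k+(ν-k)+k = (r:ℝ)*k+ν := by ring
    have he2 : 2*(r:ℝ)+(ν-k)/k = 2*(r:ℝ)+p-1 := by rw [hp]; field_simp; ring
    rw [hf', hgg, hd, hA]
    beta_reduce
    rw [he1, he2, hrec, hp]
    field_simp
    ring
  have claim2 : ∀ r : ℕ, d (r+1) = -(c*k) * hh r := by
    intro r
    have hG3 : (0:ℝ) < kGamma k ((r:ℝ)*k+(ν+k)+k) := kGamma_pos hk (by positivity)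
    rw [hd, hhh]
    beta_reduce
    rw [Nat.factorial_succ, pow_succ]
    push_cast
    have he3 : ((r:ℝ)+1)*k+ν+k = (r:ℝ)*k+(ν+k)+k := by ring
    have he4 : 2*((r:ℝ)+1)+p-1 = 2*(r:ℝ)+(ν+k)/k := by rw [hp]; field_simp; ring
    rw [he3, he4]
    have hr1 : ((r:ℝ)+1) ≠ 0 := by positivity
    field_simp
  -- summability
  have hf'x : Summable (fun r => f' r x) := Summable.of_norm_bounded hu
    (fun r => hbound r x hmem)
  have hS2 : Summable (fun r => 2*k*f' r x) := hf'x.mul_left _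
  have hdsum : Summable d := by
    apply Summable.of_norm_bounded (summable_master hk hν q (k*B) hq0 (by positivity))
    intro r
    have hGF := mul_pos (hGpos r) (hFpos r)
    have habs : ‖d r‖ = (r:ℝ)*k *
        (|c|^r / (kGamma k ((r:ℝ)*k+ν+k) * (r.factorial:ℝ)) * (x/2)^(2*(r:ℝ)+p-1)) := by
      rw [Real.norm_eq_abs, hd]
      beta_reduce
      rw [abs_mul, abs_mul, abs_mul, abs_div, abs_pow, abs_neg, abs_of_pos hGF,
        abs_of_nonneg (Real.rpow_nonneg (by positivity : (0:ℝ) ≤ x/2) _),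
        Nat.abs_cast, abs_of_pos hk]
    rw [habs, hsplit r x hx]
    have hb1 : ((x/2)^2) ^ r ≤ (x^2) ^ r := pow_le_pow_left₀ (by positivity) (by nlinarith) r
    have hb2 : (x/2) ^ (p-1) ≤ B := hBle _ (by linarith) (by linarith)
    have hm : ((x/2)^2) ^ r * (x/2)^(p-1) ≤ (x^2)^r * B :=
      mul_le_mul hb1 hb2 (Real.rpow_nonneg (by positivity) _) (by positivity)
    have hc : q ^ r = |c|^r * (x^2)^r := by rw [hq, mul_pow]
    have hnum : ((r:ℝ)*k) * (|c|^r * (((x/2)^2)^r * (x/2)^(p-1)))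
        ≤ (k*(2*(r:ℝ)+p+1)) * (|c|^r * ((x^2)^r * B)) := by
      apply mul_le_mul (by nlinarith) (mul_le_mul_of_nonneg_left hm (by positivity))
        (by positivity) (by positivity)
    calc (r:ℝ)*k * (|c|^r / (kGamma k ((r:ℝ)*k+ν+k) * (r.factorial:ℝ)) *
          (((x/2)^2)^r * (x/2)^(p-1)))
        = ((r:ℝ)*k) * (|c|^r * (((x/2)^2)^r * (x/2)^(p-1))) /
            (kGamma k ((r:ℝ)*k+ν+k) * (r.factorial:ℝ)) := by ring
      _ ≤ (k*(2*(r:ℝ)+p+1)) * (|c|^r * ((x^2)^r * B)) /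
            (kGamma k ((r:ℝ)*k+ν+k) * (r.factorial:ℝ)) := (div_le_div_iff_of_pos_right hGF).mpr hnum
      _ = k*B * (2*(r:ℝ)+p+1) * q^r / (kGamma k ((r:ℝ)*k+ν+k) * (r.factorial:ℝ)) := by
          rw [hc]; ring
  have hggsum : Summable gg := by
    have hthis : gg = fun r => 2*k*f' r x - d r := funext fun r => by rw [claim1 r]; ring
    rw [hthis]; exact hS2.sub hdsum
  have hd0 : d 0 = 0 := by simp [hd]
  -- final computation
  rw [hDeriv, hWg, hWh]
  calc 2*k*∑' r, f' r x = ∑' r, 2*k*f' r x := tsum_mul_left.symm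
    _ = ∑' r, (gg r + d r) := tsum_congr claim1
    _ = (∑' r, gg r) + ∑' r, d r := Summable.tsum_add hggsum hdsum
    _ = (∑' r, gg r) + (d 0 + ∑' r, d (r+1)) := by rw [← Summable.tsum_eq_zero_add hdsum]
    _ = (∑' r, gg r) + ∑' r, (-(c*k)) * hh r := by rw [hd0, zero_add, tsum_congr claim2]
    _ = (∑' r, gg r) - c*k*∑' r, hh r := by rw [tsum_mul_left]; ring
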